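/- For the (1,1,-1) reduced system with Θ > 0, the point (X,Y,Z) = (0,0,Θ) is an equilibrium on the hyperboloid Z²-X²-Y²=Θ², and the Hamiltonian value there is H = (1/2) log(Θ/2); moreover for Θ > 0 it is the only equilibrium of the system with Z > 0 satisfying Z²-X²-Y²=Θ². -/
import Mathlib


/-- For Θ > 0, the point (0,0,Θ) is an equilibrium of the (1,1,-1) reduced
system on the hyperboloid, its Hamiltonian value is (1/2)log(Θ/2), and it is
the only equilibrium with Z > 0 on the hyperboloid Z² - X² - Y² = Θ². -/
theorem collinear_equilibrium_unique (Θ : ℝ) (hΘ : 0 < Θ) :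
    ((-2 * (0 : ℝ) / (Θ + Θ) + 4 * Θ * 0 / (Θ ^ 2 - 0 ^ 2) = 0 ∧
      2 * (0 : ℝ) / (Θ + Θ) = 0 ∧
      4 * (0 : ℝ) * 0 / (Θ ^ 2 - 0 ^ 2) = 0) ∧
     Θ ^ 2 - (0 : ℝ) ^ 2 - (0 : ℝ) ^ 2 = Θ ^ 2 ∧
     -(1 / 2) * Real.log (Θ + Θ) + (1 / 2) * Real.log (Θ ^ 2 - 0 ^ 2)
       = (1 / 2) * Real.log (Θ / 2)) ∧
    ∀ X Y Z : ℝ, 0 < Z → 0 < Z + Θ → X ^ 2 < Z ^ 2 →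
      Z ^ 2 - X ^ 2 - Y ^ 2 = Θ ^ 2 →
      -2 * Y / (Z + Θ) + 4 * Z * Y / (Z ^ 2 - X ^ 2) = 0 →
      2 * X / (Z + Θ) = 0 →
      4 * X * Y / (Z ^ 2 - X ^ 2) = 0 →
      X = 0 ∧ Y = 0 ∧ Z = Θ := by
  constructor
  · refine ⟨⟨by ring, by ring, by ring⟩, by ring, ?_⟩
    have h1 : Θ + Θ ≠ 0 := by positivity
    have h2 : (Θ : ℝ) ^ 2 - 0 ^ 2 = Θ * Θ := by ring
    rw [h2, Real.log_mul hΘ.ne' hΘ.ne',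
      show Θ / 2 = (Θ + Θ) / 4 by ring,
      Real.log_div (by positivity) (by norm_num),
      show (4 : ℝ) = 2 * 2 by norm_num, Real.log_mul (by norm_num) (by norm_num),
      show Θ + Θ = 2 * Θ by ring, Real.log_mul (by norm_num) hΘ.ne']
    ring
  · intro X Y Z hZ hZΘ hX2 hhyp h1 h2 h3
    have hZΘ' : Z + Θ ≠ 0 := hZΘ.ne'
    have hX : X = 0 := by
      field_simp at h2; linarith
    subst hX
    have hd : Z ^ 2 - 0 ^ 2 ≠ 0 := by
      have : (0:ℝ) < Z ^ 2 := by positivity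
      simpa using this.ne'
    have hY : Y = 0 := by
      rw [div_add_div _ _ hZΘ' hd] at h1
      have h1' : -2 * Y * (Z ^ 2 - 0 ^ 2) + (Z + Θ) * (4 * Z * Y) = 0 := by
        exact (div_eq_zero_iff.mp h1).resolve_right (mul_ne_zero hZΘ' hd)
      have hfac : Y * (2 * Z ^ 2 + 4 * Z * Θ) = 0 := by nlinarith [h1']
      rcases mul_eq_zero.mp hfac with h | h
      · exact h
      · nlinarith
    subst hY
    refine ⟨rfl, rfl, ?_⟩
    have : Z ^ 2 = Θ ^ 2 := by nlinarith
    nlinarith
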